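/- Let μ be the Prouhet–Thue–Morse endomorphism of the free monoid {a,b}*, determined by μ(a) = ab and μ(b) = ba. For every natural number n, the language Im μⁿ = {μⁿ(w) : w ∈ {a,b}*} is star-free. -/

import Mathlib

/-- The star-free languages over the alphabet `A`: the smallest class of languages
containing `∅`, `{ε}` and the singletons `{a}` for letters `a`, and closed under finite
union, concatenation, and complement. -/
inductive StarFree {A : Type} : Set (List A) → Prop
  | empty : StarFree (∅ : Set (List A))
  | eps : StarFree {([] : List A)}
  | single (a : A) : StarFree (({[a]} : Set (List A)))
  | union {L M : Set (List A)} : StarFree L → StarFree M → StarFree (L ∪ M)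
  | concat {L M : Set (List A)} : StarFree L → StarFree M →
      StarFree (Set.image2 (· ++ ·) L M)
  | compl {L : Set (List A)} : StarFree L → StarFree Lᶜ

/-- The Prouhet–Thue–Morse endomorphism of the free monoid on the two-letter alphabet
`Bool`, where `true` plays the role of `a` and `false` that of `b`: it is the unique
monoid endomorphism with `a ↦ ab` and `b ↦ ba`. -/
def ptm (w : List Bool) : List Bool :=
  w.flatMap fun c => if c then [true, false] else [false, true]

namespace SFPTM

open List

/-- Alternating words. -/
def Alt (w : List Bool) : Prop := w.Chain' (· ≠ ·)

/-- Alternating words starting and ending with `c` (necessarily of odd length). -/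
def R (c : Bool) : Set (List Bool) :=
  {w | Alt w ∧ w.head? = some c ∧ w.getLast? = some c}

lemma R_ne_nil {c : Bool} {w : List Bool} (h : w ∈ R c) : w ≠ [] := by
  rintro rfl; simpa using h.2.1

/-- The "bad patterns": a word is an image under `ptm` iff it avoids all of them. -/
def Bad : Set (List Bool) :=
  {w | (∃ c, w ∈ R c) ∨
       (∃ c r y, r ∈ R c ∧ w = r ++ c :: y) ∨
       (∃ c x r y, r ∈ R c ∧ w = x ++ c :: (r ++ c :: y)) ∨
       (∃ c x r, r ∈ R c ∧ w = x ++ c :: r)}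

lemma ptm_nil : ptm [] = [] := rfl

lemma ptm_cons (e : Bool) (u : List Bool) : ptm (e :: u) = e :: (!e) :: ptm u := by
  cases e <;> simp [ptm]

lemma ptm_append (u v : List Bool) : ptm (u ++ v) = ptm u ++ ptm v := by
  simp [ptm]

lemma mem_R_cons_cons {e : Bool} {z : List Bool} :
    (e :: (!e) :: z) ∈ R e ↔ z ∈ R e := by
  constructor
  · rintro ⟨halt, -, hl⟩
    have halt' : List.IsChain (· ≠ ·) (e :: (!e) :: z) := halt
    cases z with
    | nil => exfalso; cases e <;> simp_all
    | cons z0 z' =>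
      rw [List.isChain_cons_cons, List.isChain_cons_cons] at halt'
      have hz0 : z0 = e := by
        have := halt'.2.1; cases e <;> cases z0 <;> simp_all
      refine ⟨halt'.2.2, by simp [hz0], ?_⟩
      have h2 := List.getLast?_append_of_ne_nil [e, !e] (l₂ := z0 :: z') (by simp)
      rw [← h2]; exact hl
  · rintro ⟨halt, hh, hl⟩
    cases z with
    | nil => simp at hh
    | cons z0 z' =>
      have hz0 : z0 = e := by simpa using hh
      refine ⟨?_, rfl, ?_⟩
      · show List.IsChain (· ≠ ·) _
        rw [List.isChain_cons_cons, List.isChain_cons_cons]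
        refine ⟨by cases e <;> simp, by rw [hz0]; cases e <;> simp, halt⟩
      · show ([e, !e] ++ (z0 :: z')).getLast? = some e
        rw [List.getLast?_append_of_ne_nil [e, !e] (l₂ := z0 :: z') (by simp)]
        exact hl

lemma mem_R_singleton (c : Bool) : [c] ∈ R c :=
  ⟨List.isChain_singleton c, rfl, rfl⟩

lemma bad_tail {e : Bool} {z : List Bool} (h : (e :: (!e) :: z) ∈ Bad) : z ∈ Bad := by
  rcases h with ⟨c, hc⟩ | ⟨c, r, y, hr, heq⟩ | ⟨c, x, r, y, hr, heq⟩ | ⟨c, x, r, hr, heq⟩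
  · -- whole word alternating with equal ends
    have hce : c = e := by have := hc.2.1; simpa using this.symm
    subst hce
    exact Or.inl ⟨c, mem_R_cons_cons.mp hc⟩
  · -- w = r ++ c :: y
    cases r with
    | nil => exact absurd rfl (R_ne_nil hr)
    | cons r0 r' =>
      have h1 : r0 = c := by simpa using hr.2.1
      cases r' with
      | nil =>
        simp only [List.cons_append, List.nil_append, List.cons.injEq] at heq
        obtain ⟨he0, he1, -⟩ := heq
        rw [← h1, ← he0] at he1
        exact absurd he1 (by cases e <;> simp)
      | cons r1 r'' =>
        simp only [List.cons_append, List.cons.injEq] at heq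
        obtain ⟨he0, he1, he2⟩ := heq
        have hc : c = e := h1.symm.trans he0.symm
        rw [← he0, ← he1, hc] at hr
        exact Or.inr (Or.inl ⟨e, r'', y, mem_R_cons_cons.mp hr, by rw [he2, hc]⟩)
  · -- w = x ++ c :: (r ++ c :: y)
    cases x with
    | nil =>
      simp only [List.nil_append, List.cons.injEq] at heq
      obtain ⟨he0, he1⟩ := heq
      cases r with
      | nil => exact absurd rfl (R_ne_nil hr)
      | cons r0 r' =>
        have h1 : r0 = c := by simpa using hr.2.1
        simp only [List.cons_append, List.cons.injEq] at he1
        exact absurd ((he1.1.trans h1).trans he0.symm) (by cases e <;> simp)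
    | cons x0 x' =>
      cases x' with
      | nil =>
        simp only [List.cons_append, List.nil_append, List.cons.injEq] at heq
        obtain ⟨-, he1, he2⟩ := heq
        exact Or.inr (Or.inl ⟨c, r, y, hr, he2⟩)
      | cons x1 x'' =>
        simp only [List.cons_append, List.cons.injEq] at heq
        obtain ⟨-, -, he2⟩ := heq
        exact Or.inr (Or.inr (Or.inl ⟨c, x'', r, y, hr, he2⟩))
  · -- w = x ++ c :: r
    cases x with
    | nil =>
      simp only [List.nil_append, List.cons.injEq] at heq
      obtain ⟨he0, he1⟩ := heq
      cases r with
      | nil => exact absurd rfl (R_ne_nil hr)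
      | cons r0 r' =>
        have h1 : r0 = c := by simpa using hr.2.1
        simp only [List.cons.injEq] at he1
        exact absurd ((he1.1.trans h1).trans he0.symm) (by cases e <;> simp)
    | cons x0 x' =>
      cases x' with
      | nil =>
        simp only [List.cons_append, List.nil_append, List.cons.injEq] at heq
        obtain ⟨-, he1, he2⟩ := heq
        exact Or.inl ⟨c, by rw [he2]; exact hr⟩
      | cons x1 x'' =>
        simp only [List.cons_append, List.cons.injEq] at heq
        obtain ⟨-, -, he2⟩ := heq
        exact Or.inr (Or.inr (Or.inr ⟨c, x'', r, hr, he2⟩))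

lemma bad_cons {e : Bool} {z : List Bool} (h : z ∈ Bad) : (e :: (!e) :: z) ∈ Bad := by
  rcases h with ⟨c, hc⟩ | ⟨c, r, y, hr, rfl⟩ | ⟨c, x, r, y, hr, rfl⟩ | ⟨c, x, r, hr, rfl⟩
  · by_cases hce : c = e
    · subst hce
      exact Or.inl ⟨c, mem_R_cons_cons.mpr hc⟩
    · have hc' : c = !e := by cases e <;> cases c <;> simp_all
      subst hc'
      exact Or.inr (Or.inr (Or.inr ⟨!e, [e], z, hc, by simp⟩))
  · by_cases hce : c = e
    · subst hce
      exact Or.inr (Or.inl ⟨c, c :: (!c) :: r, y, mem_R_cons_cons.mpr hr, by simp⟩)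
    · have hc' : c = !e := by cases e <;> cases c <;> simp_all
      subst hc'
      exact Or.inr (Or.inr (Or.inl ⟨!e, [e], r, y, hr, by simp⟩))
  · exact Or.inr (Or.inr (Or.inl ⟨c, e :: (!e) :: x, r, y, hr, by simp⟩))
  · exact Or.inr (Or.inr (Or.inr ⟨c, e :: (!e) :: x, r, hr, by simp⟩))

lemma nil_not_bad : ([] : List Bool) ∉ Bad := by
  rintro (⟨c, hc⟩ | ⟨c, r, y, hr, heq⟩ | ⟨c, x, r, y, hr, heq⟩ | ⟨c, x, r, hr, heq⟩)
  · exact R_ne_nil hc rfl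
  · exact (by simp : r ++ c :: y ≠ []) heq.symm
  · exact (by simp : x ++ c :: (r ++ c :: y) ≠ []) heq.symm
  · exact (by simp : x ++ c :: r ≠ []) heq.symm

lemma ptm_not_bad (u : List Bool) : ptm u ∉ Bad := by
  induction u with
  | nil => exact nil_not_bad
  | cons e u ih =>
    rw [ptm_cons]
    exact fun h => ih (bad_tail h)

theorem mem_range_of_not_bad : ∀ (w : List Bool), w ∉ Bad → w ∈ Set.range ptm
  | [], _ => ⟨[], rfl⟩
  | [c], h => absurd (Or.inl ⟨c, mem_R_singleton c⟩) h
  | c :: d :: v, h => by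
    by_cases hdc : d = c
    · subst hdc
      exact absurd (Or.inr (Or.inl ⟨d, [d], v, mem_R_singleton d, by simp⟩)) h
    · have hd : d = !c := by cases c <;> cases d <;> simp_all
      subst hd
      have hv : v ∉ Bad := fun hb => h (bad_cons hb)
      obtain ⟨u, hu⟩ := mem_range_of_not_bad v hv
      exact ⟨c :: u, by rw [ptm_cons, hu]⟩

lemma range_eq : Set.range ptm = Badᶜ := by
  ext w
  constructor
  · rintro ⟨u, rfl⟩
    exact ptm_not_bad u
  · exact mem_range_of_not_bad w

/-! ### Star-freeness of the building blocks -/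

lemma sf_congr {L M : Set (List Bool)} (h : StarFree L) (e : L = M) : StarFree M := e ▸ h

lemma sf_univ : StarFree (Set.univ : Set (List Bool)) :=
  sf_congr (.compl .empty) (by simp)

lemma sf_inter {L M : Set (List Bool)} (hL : StarFree L) (hM : StarFree M) :
    StarFree (L ∩ M) :=
  sf_congr (.compl (.union (.compl hL) (.compl hM)))
    (by rw [Set.compl_union, compl_compl, compl_compl])

lemma sf_head (c : Bool) : StarFree {w : List Bool | w.head? = some c} := by
  refine sf_congr (.concat (.single c) sf_univ) (Set.ext fun w => ?_)
  constructor
  · rintro ⟨a, rfl, b, -, rfl⟩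
    rfl
  · intro hw
    cases w with
    | nil => exact absurd hw (by simp)
    | cons a t =>
      have ha : a = c := by simpa using hw
      exact ⟨[c], rfl, t, trivial, by simp [ha]⟩

lemma sf_last (c : Bool) : StarFree {w : List Bool | w.getLast? = some c} := by
  refine sf_congr (.concat sf_univ (.single c)) (Set.ext fun w => ?_)
  constructor
  · rintro ⟨a, -, b, rfl, rfl⟩
    exact List.getLast?_concat (l := a)
  · intro hw
    have hne : w ≠ [] := by rintro rfl; simp at hw
    refine ⟨w.dropLast, trivial, [w.getLast hne], ?_, List.dropLast_append_getLast hne⟩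
    have hw' : w.getLast? = some c := hw
    have h1 := List.getLast?_eq_getLast (l := w) hne
    rw [h1] at hw'
    show [w.getLast hne] = [c]
    rw [Option.some.inj hw']

lemma not_alt_iff (w : List Bool) :
    ¬ Alt w ↔ ∃ (x : List Bool) (c : Bool) (y : List Bool), w = x ++ c :: c :: y := by
  induction w with
  | nil =>
    constructor
    · intro h; exact absurd List.isChain_nil h
    · rintro ⟨x, c, y, hx⟩; cases x <;> simp_all
  | cons a t ih =>
    cases t with
    | nil =>
      constructor
      · intro h; exact absurd (List.isChain_singleton a) h
      · rintro ⟨x, c, y, hx⟩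
        cases x with
        | nil => simp at hx
        | cons x0 x' =>
          simp only [List.cons_append, List.cons.injEq] at hx
          exact absurd hx.2 (by cases x' <;> simp)
    | cons b t' =>
      rw [show Alt (a :: b :: t') ↔ (a ≠ b ∧ Alt (b :: t')) from List.isChain_cons_cons]
      constructor
      · intro h
        by_cases hab : a = b
        · exact ⟨[], a, t', by rw [← hab, List.nil_append]⟩
        · obtain ⟨x, c, y, hx⟩ := ih.mp (fun h2 => h ⟨hab, h2⟩)
          exact ⟨a :: x, c, y, by rw [List.cons_append, ← hx]⟩
      · rintro ⟨x, c, y, hx⟩ ⟨hab, halt⟩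
        cases x with
        | nil =>
          have hx' : a :: b :: t' = c :: c :: y := hx
          simp only [List.cons.injEq] at hx'
          exact hab (hx'.1.trans hx'.2.1.symm)
        | cons x0 x' =>
          simp only [List.cons_append, List.cons.injEq] at hx
          exact ih.mpr ⟨x', c, y, hx.2⟩ halt

lemma sf_pairpattern (c : Bool) :
    StarFree {w : List Bool | ∃ x y, w = x ++ c :: c :: y} := by
  have h2 : StarFree ({[c, c]} : Set (List Bool)) := by
    refine sf_congr (.concat (.single c) (.single c)) (Set.ext fun w => ?_)
    constructor
    · rintro ⟨a, rfl, b, rfl, rfl⟩; rfl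
    · rintro rfl; exact ⟨[c], rfl, [c], rfl, rfl⟩
  refine sf_congr (.concat (.concat sf_univ h2) sf_univ) (Set.ext fun w => ?_)
  constructor
  · rintro ⟨a, ⟨x, -, b, rfl, rfl⟩, y, -, rfl⟩
    exact ⟨x, y, by simp⟩
  · rintro ⟨x, y, rfl⟩
    exact ⟨x ++ [c, c], ⟨x, trivial, [c, c], rfl, rfl⟩, y, trivial, by simp⟩

lemma sf_alt : StarFree {w : List Bool | Alt w} := by
  have hU : StarFree ({w : List Bool | ∃ x y, w = x ++ true :: true :: y} ∪
      {w : List Bool | ∃ x y, w = x ++ false :: false :: y}) :=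
    .union (sf_pairpattern true) (sf_pairpattern false)
  refine sf_congr (.compl hU) (Set.ext fun w => ?_)
  rw [Set.mem_compl_iff]
  constructor
  · intro h
    show Alt w
    by_contra hna
    obtain ⟨x, c, y, hx⟩ := (not_alt_iff w).mp hna
    cases c
    · exact h (Or.inr ⟨x, y, hx⟩)
    · exact h (Or.inl ⟨x, y, hx⟩)
  · intro ha hmem
    rcases hmem with ⟨x, y, hx⟩ | ⟨x, y, hx⟩
    · exact (not_alt_iff w).mpr ⟨x, true, y, hx⟩ ha
    · exact (not_alt_iff w).mpr ⟨x, false, y, hx⟩ ha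

lemma sf_R (c : Bool) : StarFree (R c) :=
  sf_congr (sf_inter sf_alt (sf_inter (sf_head c) (sf_last c))) rfl

/-! ### Star-freeness of `Bad` -/

lemma sf_exists_bool {P : Bool → List Bool → Prop}
    (h : ∀ c, StarFree {w | P c w}) : StarFree {w : List Bool | ∃ c, P c w} := by
  refine sf_congr (.union (h true) (h false)) (Set.ext fun w => ?_)
  constructor
  · rintro (h1 | h1)
    · exact ⟨true, h1⟩
    · exact ⟨false, h1⟩
  · rintro ⟨c, h1⟩
    cases c
    · exact Or.inr h1
    · exact Or.inl h1

lemma sf_badS2piece (c : Bool) :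
    StarFree {w : List Bool | ∃ r y, r ∈ R c ∧ w = r ++ c :: y} := by
  refine sf_congr (.concat (.concat (sf_R c) (.single c)) sf_univ) (Set.ext fun w => ?_)
  constructor
  · rintro ⟨a, ⟨r, hr, b, rfl, rfl⟩, y, -, rfl⟩
    exact ⟨r, y, hr, by simp⟩
  · rintro ⟨r, y, hr, rfl⟩
    exact ⟨r ++ [c], ⟨r, hr, [c], rfl, rfl⟩, y, trivial, by simp⟩

lemma sf_badS3piece (c : Bool) :
    StarFree {w : List Bool | ∃ x r y, r ∈ R c ∧ w = x ++ c :: (r ++ c :: y)} := by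
  refine sf_congr
    (.concat (.concat (.concat (.concat sf_univ (.single c)) (sf_R c)) (.single c)) sf_univ)
    (Set.ext fun w => ?_)
  constructor
  · rintro ⟨a, ⟨b, ⟨d, ⟨x, -, e, rfl, rfl⟩, r, hr, rfl⟩, f, rfl, rfl⟩, y, -, rfl⟩
    exact ⟨x, r, y, hr, by simp⟩
  · rintro ⟨x, r, y, hr, rfl⟩
    exact ⟨((x ++ [c]) ++ r) ++ [c],
      ⟨(x ++ [c]) ++ r, ⟨x ++ [c], ⟨x, trivial, [c], rfl, rfl⟩, r, hr, rfl⟩, [c], rfl, rfl⟩,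
      y, trivial, by simp⟩

lemma sf_badS4piece (c : Bool) :
    StarFree {w : List Bool | ∃ x r, r ∈ R c ∧ w = x ++ c :: r} := by
  refine sf_congr (.concat (.concat sf_univ (.single c)) (sf_R c)) (Set.ext fun w => ?_)
  constructor
  · rintro ⟨a, ⟨x, -, b, rfl, rfl⟩, r, hr, rfl⟩
    exact ⟨x, r, hr, by simp⟩
  · rintro ⟨x, r, hr, rfl⟩
    exact ⟨x ++ [c], ⟨x, trivial, [c], rfl, rfl⟩, r, hr, by simp⟩

lemma sf_bad : StarFree Bad := by
  have h1 : StarFree {w : List Bool | ∃ c, w ∈ R c} :=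
    sf_exists_bool (fun c => sf_R c)
  have h2 : StarFree {w : List Bool | ∃ c r y, r ∈ R c ∧ w = r ++ c :: y} :=
    sf_exists_bool (fun c => sf_badS2piece c)
  have h3 : StarFree {w : List Bool | ∃ c x r y, r ∈ R c ∧ w = x ++ c :: (r ++ c :: y)} :=
    sf_exists_bool (fun c => sf_badS3piece c)
  have h4 : StarFree {w : List Bool | ∃ c x r, r ∈ R c ∧ w = x ++ c :: r} :=
    sf_exists_bool (fun c => sf_badS4piece c)
  exact sf_congr (.union h1 (.union h2 (.union h3 h4))) rfl

lemma sf_range : StarFree (Set.range ptm) :=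
  sf_congr (.compl sf_bad) range_eq.symm

/-! ### `ptm` preserves star-freeness -/

lemma ptm_injective : Function.Injective ptm := by
  intro u v h
  induction u generalizing v with
  | nil =>
    cases v with
    | nil => rfl
    | cons f v' => rw [ptm_cons] at h; exact absurd h (by simp [ptm_nil])
  | cons e u' ih =>
    cases v with
    | nil => rw [ptm_cons] at h; exact absurd h (by simp [ptm_nil])
    | cons f v' =>
      rw [ptm_cons, ptm_cons] at h
      simp only [List.cons.injEq] at h
      rw [h.1, ih h.2.2]

lemma sf_image {L : Set (List Bool)} (h : StarFree L) : StarFree (ptm '' L) := by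
  induction h with
  | empty => exact sf_congr .empty (by simp)
  | eps => exact sf_congr .eps (by rw [Set.image_singleton]; rfl)
  | single a =>
    refine sf_congr (.concat (.single a) (.single (!a))) (Set.ext fun w => ?_)
    constructor
    · rintro ⟨x, rfl, y, rfl, rfl⟩
      exact ⟨[a], rfl, by cases a <;> rfl⟩
    · rintro ⟨u, rfl, rfl⟩
      exact ⟨[a], rfl, [!a], rfl, by cases a <;> rfl⟩
  | union h1 h2 ih1 ih2 => exact sf_congr (.union ih1 ih2) (Set.image_union _ _ _).symm
  | concat h1 h2 ih1 ih2 =>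
    refine sf_congr (.concat ih1 ih2) (Set.ext fun w => ?_)
    constructor
    · rintro ⟨p, ⟨x, hx, rfl⟩, q, ⟨y, hy, rfl⟩, rfl⟩
      exact ⟨x ++ y, ⟨x, hx, y, hy, rfl⟩, ptm_append x y⟩
    · rintro ⟨z, ⟨x, hx, y, hy, rfl⟩, rfl⟩
      exact ⟨ptm x, ⟨x, hx, rfl⟩, ptm y, ⟨y, hy, rfl⟩, (ptm_append x y).symm⟩
  | compl h ih =>
    refine sf_congr (sf_inter sf_range (.compl ih)) (Set.ext fun w => ?_)
    constructor
    · rintro ⟨⟨u, rfl⟩, hn⟩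
      exact ⟨u, fun hu => hn ⟨u, hu, rfl⟩, rfl⟩
    · rintro ⟨u, hu, rfl⟩
      refine ⟨⟨u, rfl⟩, fun h2 => ?_⟩
      obtain ⟨v, hv, he⟩ := h2
      exact hu (ptm_injective he ▸ hv)

end SFPTM

/-- For every `n`, the image of the `n`-th iterate of the
Prouhet–Thue–Morse endomorphism is a star-free language. -/
theorem starFree_range_ptm_iterate (n : ℕ) : StarFree (Set.range (ptm^[n])) := by
  induction n with
  | zero =>
    rw [Function.iterate_zero, Set.range_id]
    exact SFPTM.sf_univ
  | succ n ih =>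
    rw [Function.iterate_succ', Set.range_comp]
    exact SFPTM.sf_image ih
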